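/- Let G₁, …, G_t be directed graphs on [n], each containing all self-loops, and each k-rooted with a common root set M ⊆ [n] of size at most k. If t ≥ n, then M is a broadcasting set of the product graph G₁ ∘ ⋯ ∘ G_t, i.e., every vertex has an incoming edge from some vertex of M in the product. -/
import Mathlib


/-- The edge relation of the product graph `G₁ ∘ ⋯ ∘ G_t` of a list of graphs. -/
def prodRel {n : ℕ} : List (Fin n → Fin n → Prop) → (Fin n → Fin n → Prop)
  | [], i, j => i = j
  | G :: Gs, i, j => ∃ u, G i u ∧ prodRel Gs u j

lemma exit_edge {n : ℕ} (G : Fin n → Fin n → Prop) (S : Finset (Fin n)) :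
    ∀ {m v : Fin n}, Relation.ReflTransGen G m v → m ∈ S → v ∉ S →
      ∃ i ∈ S, ∃ j, j ∉ S ∧ G i j := by
  intro m v h
  induction h with
  | refl => intro hm hv; exact absurd hm hv
  | @tail b c _ h2 ih =>
    intro hm hv
    by_cases hb : b ∈ S
    · exact ⟨b, hb, c, hv, h2⟩
    · exact ih hm hb

lemma aux_broadcast {n : ℕ} :
    ∀ (l : List (Fin n → Fin n → Prop)),
      (∀ G ∈ l, ∀ v, G v v) →
      ∀ (M : Finset (Fin n)),
      (∀ G ∈ l, ∀ v : Fin n, ∃ m ∈ M, Relation.ReflTransGen G m v) →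
      ∀ S : Finset (Fin n), M ⊆ S → n ≤ l.length + S.card →
      ∀ v : Fin n, ∃ m ∈ S, prodRel l m v := by
  intro l
  induction l with
  | nil =>
    intro _ M _ S _ hcard v
    have hSuniv : S = Finset.univ := by
      apply Finset.eq_univ_of_card
      have h1 : S.card ≤ Fintype.card (Fin n) := S.card_le_univ
      simp only [Fintype.card_fin] at h1 ⊢
      simpa using le_antisymm h1 (by simpa using hcard)
    exact ⟨v, by simp [hSuniv], rfl⟩
  | cons G Gs ih =>
    intro hrefl M hrooted S hMS hcard v
    classical
    set S' : Finset (Fin n) := Finset.univ.filter (fun j => ∃ i ∈ S, G i j) with hS'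
    have hSS' : S ⊆ S' := by
      intro j hj
      simp only [hS', Finset.mem_filter, Finset.mem_univ, true_and]
      exact ⟨j, hj, hrefl G (by simp) j⟩
    have hcard' : n ≤ Gs.length + S'.card := by
      by_cases hS : S = Finset.univ
      · have : n ≤ S'.card := by
          have := Finset.card_le_card hSS'
          simp [hS] at this
          omega
        omega
      · obtain ⟨w, hw⟩ : ∃ w, w ∉ S := by
          by_contra h
          push_neg at h
          exact hS (Finset.eq_univ_iff_forall.2 h)
        obtain ⟨m, hm, hpath⟩ := hrooted G (by simp) w
        obtain ⟨i, hi, j, hj, hGij⟩ := exit_edge G S hpath (hMS hm) hw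
        have hjS' : j ∈ S' := by
          simp only [hS', Finset.mem_filter, Finset.mem_univ, true_and]
          exact ⟨i, hi, hGij⟩
        have hins : insert j S ⊆ S' := by
          intro x hx
          rcases Finset.mem_insert.1 hx with h | h
          · exact h ▸ hjS'
          · exact hSS' h
        have hc := Finset.card_le_card hins
        rw [Finset.card_insert_of_notMem hj] at hc
        simp only [List.length_cons] at hcard
        omega
    obtain ⟨u, hu, hp⟩ := ih (fun H hH => hrefl H (by simp [hH]))
      M (fun H hH => hrooted H (by simp [hH])) S' (hMS.trans hSS') hcard' v
    simp only [hS', Finset.mem_filter, Finset.mem_univ, true_and] at hu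
    obtain ⟨i, hi, hGiu⟩ := hu
    exact ⟨i, hi, u, hGiu, hp⟩

theorem rooted_product_broadcastable {n k : ℕ}
    (l : List (Fin n → Fin n → Prop))
    (hrefl : ∀ G ∈ l, ∀ v, G v v)
    (M : Finset (Fin n)) (hMcard : M.card ≤ k)
    (hrooted : ∀ G ∈ l, ∀ v : Fin n, ∃ m ∈ M, Relation.ReflTransGen G m v)
    (hlen : n ≤ l.length) :
    ∀ v : Fin n, ∃ m ∈ M, prodRel l m v :=
  aux_broadcast l hrefl M hrooted M subset_rfl (by omega)
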